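/- On the Poincaré disk with metric G of curvature -1, the Hesse function Λ_B(u) = (B,Ξ(u)) satisfies the eikonal-type identity ⟨dΛ_B, dΛ_B⟩_G = Λ_B² + (B,B), where (B,B) is the Minkowski norm of B ∈ ℝ³. -/

import Mathlib

/-- Partial derivative ∂_i f at x. -/
noncomputable def pd {n : ℕ} (i : Fin n) (f : (Fin n → ℝ) → ℝ) (x : Fin n → ℝ) : ℝ :=
  fderiv ℝ f x (Pi.single i 1)

open Finset in
/-- Christoffel symbols Γ^i_{jk} of the Levi-Civita connection of the metric g
(with inverse ginv), in local coordinates. -/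
noncomputable def Gamma {n : ℕ} (g ginv : (Fin n → ℝ) → Matrix (Fin n) (Fin n) ℝ)
    (x : Fin n → ℝ) (i j k : Fin n) : ℝ :=
  (1 / 2) * ∑ l, ginv x i l *
    (pd j (fun y => g y l k) x + pd k (fun y => g y l j) x - pd l (fun y => g y j k) x)
/-- The open unit disk in ℝ² ≅ ℂ. -/
def diskR : Set (Fin 2 → ℝ) := {x | x 0 ^ 2 + x 1 ^ 2 < 1}

/-- The Poincaré metric G = 4|du|²/(1-|u|²)² (Gaussian curvature -1) on the unit disk. -/
noncomputable def gP (x : Fin 2 → ℝ) : Matrix (Fin 2) (Fin 2) ℝ :=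
  fun i j => if i = j then 4 / (1 - (x 0 ^ 2 + x 1 ^ 2)) ^ 2 else 0

/-- The inverse Poincaré metric. -/
noncomputable def gPinv (x : Fin 2 → ℝ) : Matrix (Fin 2) (Fin 2) ℝ :=
  fun i j => if i = j then (1 - (x 0 ^ 2 + x 1 ^ 2)) ^ 2 / 4 else 0

/-- The Minkowski pairing of signature (1,2) on ℝ³. -/
noncomputable def mink (x y : Fin 3 → ℝ) : ℝ := -(x 0 * y 0) + x 1 * y 1 + x 2 * y 2

/-- The Weierstrass map Ξ in real coordinates on the unit disk. -/
noncomputable def XiR (x : Fin 2 → ℝ) : Fin 3 → ℝ :=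
  ![(1 + (x 0 ^ 2 + x 1 ^ 2)) / (1 - (x 0 ^ 2 + x 1 ^ 2)),
    2 * x 0 / (1 - (x 0 ^ 2 + x 1 ^ 2)),
    2 * x 1 / (1 - (x 0 ^ 2 + x 1 ^ 2))]

/-- Λ_B = (B, Ξ(·)). -/
noncomputable def LB (B : Fin 3 → ℝ) (x : Fin 2 → ℝ) : ℝ := mink B (XiR x)

open Finset in
/-- on the Poincaré disk of curvature -1, the Hesse function
Λ_B = (B,Ξ(·)) satisfies the eikonal-type identity ⟨dΛ_B,dΛ_B⟩_G = Λ_B² + (B,B). -/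
theorem LB_eikonal_identity (B : Fin 3 → ℝ) (x : Fin 2 → ℝ) (hx : x ∈ diskR) :
    (∑ i, ∑ j, gPinv x i j * pd i (LB B) x * pd j (LB B) x)
      = (LB B x) ^ 2 + mink B B := by
  have hx' : x 0 ^ 2 + x 1 ^ 2 < 1 := hx
  have hd : (1:ℝ) - (x 0 * x 0 + x 1 * x 1) ≠ 0 := by nlinarith [sq_nonneg (x 0), sq_nonneg (x 1)]
  have hLB : LB B = fun y : Fin 2 → ℝ =>
      (-(B 0 * (1 + (y 0 * y 0 + y 1 * y 1))) + B 1 * (2 * y 0) + B 2 * (2 * y 1))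
        * (1 - (y 0 * y 0 + y 1 * y 1))⁻¹ := by
    funext y; simp [LB, mink, XiR]; ring
  set p0 : (Fin 2 → ℝ) →L[ℝ] ℝ := ContinuousLinearMap.proj 0 with hp0
  set p1 : (Fin 2 → ℝ) →L[ℝ] ℝ := ContinuousLinearMap.proj 1 with hp1
  have h0 : HasFDerivAt (fun y : Fin 2 → ℝ => y 0) p0 x := p0.hasFDerivAt
  have h1 : HasFDerivAt (fun y : Fin 2 → ℝ => y 1) p1 x := p1.hasFDerivAt
  have hs : HasFDerivAt (fun y : Fin 2 → ℝ => y 0 * y 0 + y 1 * y 1)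
      ((x 0 • p0 + x 0 • p0) + (x 1 • p1 + x 1 • p1)) x := (h0.mul h0).add (h1.mul h1)
  have hsub := (hasFDerivAt_const (1:ℝ) x).sub hs
  have hden := (hasDerivAt_inv hd).comp_hasFDerivAt x hsub
  have hnum := ((((hasFDerivAt_const (1:ℝ) x).add hs).const_mul (B 0)).neg).add
    ((h0.const_mul 2).const_mul (B 1)) |>.add ((h1.const_mul 2).const_mul (B 2))
  have hL := hnum.mul hden
  simp only [Function.comp_def, Pi.add_def, Pi.neg_def, Pi.mul_def, Pi.sub_def] at hL
  have hpd : ∀ i : Fin 2, pd i (LB B) x =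
      ((-(B 0 * (1 + (x 0 * x 0 + x 1 * x 1))) + B 1 * (2 * x 0) + B 2 * (2 * x 1))
          * ((1 - (x 0 * x 0 + x 1 * x 1)) ^ 2)⁻¹ * (2 * x 0)
        + (1 - (x 0 * x 0 + x 1 * x 1))⁻¹ * (-(B 0 * (2 * x 0)) + 2 * B 1)) * ((Pi.single i 1 : Fin 2 → ℝ) 0)
      + ((-(B 0 * (1 + (x 0 * x 0 + x 1 * x 1))) + B 1 * (2 * x 0) + B 2 * (2 * x 1))
          * ((1 - (x 0 * x 0 + x 1 * x 1)) ^ 2)⁻¹ * (2 * x 1)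
        + (1 - (x 0 * x 0 + x 1 * x 1))⁻¹ * (-(B 0 * (2 * x 1)) + 2 * B 2)) * ((Pi.single i 1 : Fin 2 → ℝ) 1) := by
    intro i
    rw [hLB, pd, hL.fderiv]
    simp only [ContinuousLinearMap.add_apply, ContinuousLinearMap.smul_apply,
      ContinuousLinearMap.sub_apply, ContinuousLinearMap.zero_apply,
      ContinuousLinearMap.neg_apply, hp0, hp1, ContinuousLinearMap.proj_apply, smul_eq_mul]
    ring
  have e0 := hpd 0
  have e1 := hpd 1
  simp only [Pi.single_eq_same, ne_eq, Pi.single_eq_of_ne (show (1:Fin 2) ≠ 0 by decide),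
    Pi.single_eq_of_ne (show (0:Fin 2) ≠ 1 by decide), mul_zero, mul_one, add_zero,
    zero_add] at e0 e1
  rw [Fin.sum_univ_two, Fin.sum_univ_two, Fin.sum_univ_two, e0, e1, hLB]
  simp only [gPinv]
  norm_num
  have hsq : ((1:ℝ) - (x 0 * x 0 + x 1 * x 1)) ^ 2 ≠ 0 := pow_ne_zero 2 hd
  have hx2 : x 0 ^ 2 + x 1 ^ 2 = x 0 * x 0 + x 1 * x 1 := by ring
  rw [hx2]
  simp only [mink]
  field_simp [show (1:ℝ) - (x 0 ^ 2 + x 1 ^ 2) ≠ 0 by rw [hx2]; exact hd]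
  ring
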